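/- Convergence of the forward sweep to a coordinate-wise minimum: in the discrete-time finite-state setting, suppose each control update chooses $u_t^{k+1} \in \arg\min$ with the tie-breaking rule that $u_t^{k+1} = u_t^k$ whenever $u_t^k$ is among the minimizers. If $J[u_{0:T-dt}^{k+1}] = J[u_{0:T-dt}^{k}]$, then $u_t^{k+1} = u_t^k$ for every $t$, and $u^{k+1}$ satisfies the coordinate-wise optimality condition: for every $t$, $u_t^{k+1}$ minimizes $u_t \mapsto J[u_{0:t-dt}^{k+1}, u_t, u_{t+dt:T-dt}^{k+1}]$. -/

import Mathlib

open Finset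

/-- Forward state distribution at time `t` induced by `p0` and the controls `u`. -/
def pF {S U : Type} [Fintype S] (P : U → S → S → ℝ) (p0 : S → ℝ)
    (u : ℕ → U) : ℕ → S → ℝ
  | 0 => p0
  | (t+1) => fun s' => ∑ s : S, pF P p0 u t s * P (u t) s s'

/-- Backward value function, indexed by the number `k` of remaining steps. -/
def wAux {S U : Type} [Fintype S] (P : U → S → S → ℝ)
    (f : ℕ → S → U → ℝ) (g : S → ℝ) (N : ℕ) (u : ℕ → U) : ℕ → S → ℝ
  | 0 => g
  | (k+1) => fun s =>
      f (N - (k+1)) s (u (N - (k+1)))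
        + ∑ s' : S, P (u (N - (k+1))) s s' * wAux P f g N u k s'

/-- Backward value function at time `t`, with `w_N = g`. -/
def wVal {S U : Type} [Fintype S] (P : U → S → S → ℝ)
    (f : ℕ → S → U → ℝ) (g : S → ℝ) (N : ℕ) (u : ℕ → U) (t : ℕ) : S → ℝ :=
  wAux P f g N u (N - t)

/-- Total expected cost. -/
def Jval {S U : Type} [Fintype S] (P : U → S → S → ℝ) (p0 : S → ℝ)
    (f : ℕ → S → U → ℝ) (g : S → ℝ) (N : ℕ) (u : ℕ → U) : ℝ :=
  (∑ t ∈ Finset.range N, ∑ s : S, pF P p0 u t s * f t s (u t))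
    + ∑ s : S, pF P p0 u N s * g s

/-- Hybrid control sequence of the forward sweep: updated controls `uNew` before
time `t`, old controls `uOld` from time `t` onward. -/
def hyb {U : Type} (uOld uNew : ℕ → U) (t : ℕ) : ℕ → U :=
  fun τ => if τ < t then uNew τ else uOld τ

/-- The per-step sweep objective: the expected Hamiltonian at time `t` with
distribution from the updated controls and value from the old controls. -/
def sweepObj {S U : Type} [Fintype S] (P : U → S → S → ℝ) (p0 : S → ℝ)
    (f : ℕ → S → U → ℝ) (g : S → ℝ) (N : ℕ) (uk uk1 : ℕ → U) (t : ℕ)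
    (v : U) : ℝ :=
  ∑ s : S, pF P p0 (hyb uk uk1 t) t s *
    (f t s v + ∑ s' : S, P v s s' * wVal P f g N uk (t+1) s')

lemma pF_congr {S U : Type} [Fintype S] (P : U → S → S → ℝ) (p0 : S → ℝ)
    (u v : ℕ → U) (t : ℕ) (h : ∀ τ < t, u τ = v τ) :
    pF P p0 u t = pF P p0 v t := by
  induction t with
  | zero => rfl
  | succ t ih =>
    funext s'
    simp only [pF]
    rw [ih (fun τ hτ => h τ (Nat.lt_succ_of_lt hτ)), h t (Nat.lt_succ_self t)]

lemma wAux_congr {S U : Type} [Fintype S] (P : U → S → S → ℝ)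
    (f : ℕ → S → U → ℝ) (g : S → ℝ) (N : ℕ) (u v : ℕ → U) (k : ℕ) (hk : k ≤ N)
    (h : ∀ τ, N - k ≤ τ → τ < N → u τ = v τ) :
    wAux P f g N u k = wAux P f g N v k := by
  induction k with
  | zero => rfl
  | succ k ih =>
    funext s
    simp only [wAux]
    have hu : u (N - (k+1)) = v (N - (k+1)) := h _ le_rfl (by omega)
    rw [hu, ih (by omega) (fun τ h1 h2 => h τ (by omega) h2)]

lemma wVal_congr {S U : Type} [Fintype S] (P : U → S → S → ℝ)
    (f : ℕ → S → U → ℝ) (g : S → ℝ) (N : ℕ) (u v : ℕ → U) (t : ℕ) (ht : t ≤ N)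
    (h : ∀ τ, t ≤ τ → τ < N → u τ = v τ) :
    wVal P f g N u t = wVal P f g N v t := by
  unfold wVal
  exact wAux_congr P f g N u v (N - t) (Nat.sub_le N t)
    (fun τ h1 h2 => h τ (by omega) h2)

lemma wVal_succ {S U : Type} [Fintype S] (P : U → S → S → ℝ)
    (f : ℕ → S → U → ℝ) (g : S → ℝ) (N : ℕ) (u : ℕ → U) (t : ℕ) (ht : t < N) :
    wVal P f g N u t = fun s =>
      f t s (u t) + ∑ s' : S, P (u t) s s' * wVal P f g N u (t+1) s' := by
  unfold wVal
  have h1 : N - t = (N - (t+1)) + 1 := by omega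
  rw [h1]
  simp only [wAux]
  have h2 : N - ((N - (t+1)) + 1) = t := by omega
  rw [h2]

lemma Jval_decomp {S U : Type} [Fintype S] (P : U → S → S → ℝ) (p0 : S → ℝ)
    (f : ℕ → S → U → ℝ) (g : S → ℝ) (N : ℕ) (u : ℕ → U) (t : ℕ) (ht : t ≤ N) :
    Jval P p0 f g N u =
      (∑ τ ∈ Finset.range t, ∑ s : S, pF P p0 u τ s * f τ s (u τ))
        + ∑ s : S, pF P p0 u t s * wVal P f g N u t s := by
  have key : ∀ d : ℕ, Jval P p0 f g N u =
      (∑ τ ∈ Finset.range (N - d), ∑ s : S, pF P p0 u τ s * f τ s (u τ))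
        + ∑ s : S, pF P p0 u (N - d) s * wVal P f g N u (N - d) s := by
    intro d
    induction d with
    | zero =>
      simp only [Nat.sub_zero, Jval, wVal, Nat.sub_self, wAux]
    | succ d ih =>
      by_cases hd : N ≤ d
      · have : N - (d + 1) = N - d := by omega
        rw [this]; exact ih
      · push_neg at hd
        set t' := N - (d + 1) with ht'
        have ht'N : t' < N := by omega
        have hsucc : t' + 1 = N - d := by omega
        rw [ih, ← hsucc, Finset.sum_range_succ]
        have hw := wVal_succ P f g N u t' ht'N
        rw [hw]
        have hpf : ∀ s' : S, pF P p0 u (t' + 1) s' =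
            ∑ s : S, pF P p0 u t' s * P (u t') s s' := fun s' => rfl
        have : ∑ s' : S, pF P p0 u (t' + 1) s' * wVal P f g N u (t' + 1) s'
            = ∑ s : S, pF P p0 u t' s *
                ∑ s' : S, P (u t') s s' * wVal P f g N u (t' + 1) s' := by
          simp only [hpf, Finset.sum_mul, Finset.mul_sum]
          rw [Finset.sum_comm]
          apply Finset.sum_congr rfl; intro s _
          apply Finset.sum_congr rfl; intro s' _
          ring
        rw [this]
        simp only [mul_add, Finset.sum_add_distrib]
        ring
  have := key (N - t)
  rwa [Nat.sub_sub_self ht] at this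

lemma Jval_congr {S U : Type} [Fintype S] (P : U → S → S → ℝ) (p0 : S → ℝ)
    (f : ℕ → S → U → ℝ) (g : S → ℝ) (N : ℕ) (u v : ℕ → U)
    (h : ∀ τ < N, u τ = v τ) : Jval P p0 f g N u = Jval P p0 f g N v := by
  unfold Jval
  congr 1
  · apply Finset.sum_congr rfl; intro t htm
    rw [Finset.mem_range] at htm
    rw [pF_congr P p0 u v t (fun τ hτ => h τ (hτ.trans htm)), h t htm]
  · rw [pF_congr P p0 u v N h]

theorem fbsm_convergence_to_coordinatewise_minimum
    {S U : Type} [Fintype S]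
    (P : U → S → S → ℝ)
    (hPnonneg : ∀ u s s', 0 ≤ P u s s')
    (hPsum : ∀ u s, ∑ s' : S, P u s s' = 1)
    (p0 : S → ℝ) (hp0nonneg : ∀ s, 0 ≤ p0 s) (hp0sum : ∑ s : S, p0 s = 1)
    (f : ℕ → S → U → ℝ) (g : S → ℝ) (N : ℕ)
    (uk uk1 : ℕ → U)
    -- each updated control is a minimizer of the sweep objective
    (hmin : ∀ t < N, ∀ v : U,
      sweepObj P p0 f g N uk uk1 t (uk1 t) ≤ sweepObj P p0 f g N uk uk1 t v)
    -- tie-breaking rule: keep the old control whenever it is a minimizer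
    (htie : ∀ t < N,
      (∀ v : U, sweepObj P p0 f g N uk uk1 t (uk t) ≤ sweepObj P p0 f g N uk uk1 t v) →
      uk1 t = uk t)
    -- if the objective did not decrease
    (heq : Jval P p0 f g N uk1 = Jval P p0 f g N uk) :
    (∀ t < N, uk1 t = uk t) ∧
    -- coordinate-wise optimality of the resulting control
    (∀ t < N, ∀ v : U,
      Jval P p0 f g N uk1 ≤ Jval P p0 f g N (Function.update uk1 t v)) := by
  -- Step decompositions for the hybrid sequence
  have hA : ∀ t, t < N → Jval P p0 f g N (hyb uk uk1 (t+1)) =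
      (∑ τ ∈ Finset.range t, ∑ s : S, pF P p0 uk1 τ s * f τ s (uk1 τ))
        + sweepObj P p0 f g N uk uk1 t (uk1 t) := by
    intro t ht
    rw [Jval_decomp P p0 f g N _ t ht.le]
    congr 1
    · apply Finset.sum_congr rfl; intro τ hτ
      rw [Finset.mem_range] at hτ
      have h1 : pF P p0 (hyb uk uk1 (t+1)) τ = pF P p0 uk1 τ :=
        pF_congr _ _ _ _ _ (fun σ hσ => if_pos (by omega))
      have h2 : hyb uk uk1 (t+1) τ = uk1 τ := if_pos (by omega)
      rw [h1, h2]
    · have h1 : pF P p0 (hyb uk uk1 (t+1)) t = pF P p0 (hyb uk uk1 t) t :=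
        pF_congr _ _ _ _ _ (fun σ hσ => by
          show (if σ < t+1 then uk1 σ else uk σ) = (if σ < t then uk1 σ else uk σ)
          rw [if_pos (by omega), if_pos hσ])
      have h2 : hyb uk uk1 (t+1) t = uk1 t := if_pos (Nat.lt_succ_self t)
      have h3 : wVal P f g N (hyb uk uk1 (t+1)) (t+1) = wVal P f g N uk (t+1) :=
        wVal_congr _ _ _ _ _ _ _ ht (fun τ ha hb => if_neg (by omega))
      simp only [wVal_succ P f g N _ t ht, h1, h2, h3, sweepObj]
  have hB : ∀ t, t < N → Jval P p0 f g N (hyb uk uk1 t) =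
      (∑ τ ∈ Finset.range t, ∑ s : S, pF P p0 uk1 τ s * f τ s (uk1 τ))
        + sweepObj P p0 f g N uk uk1 t (uk t) := by
    intro t ht
    rw [Jval_decomp P p0 f g N _ t ht.le]
    congr 1
    · apply Finset.sum_congr rfl; intro τ hτ
      rw [Finset.mem_range] at hτ
      have h1 : pF P p0 (hyb uk uk1 t) τ = pF P p0 uk1 τ :=
        pF_congr _ _ _ _ _ (fun σ hσ => if_pos (by omega))
      have h2 : hyb uk uk1 t τ = uk1 τ := if_pos hτ
      rw [h1, h2]
    · have h2 : hyb uk uk1 t t = uk t := if_neg (lt_irrefl t)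
      have h3 : wVal P f g N (hyb uk uk1 t) (t+1) = wVal P f g N uk (t+1) :=
        wVal_congr _ _ _ _ _ _ _ ht (fun τ ha hb => if_neg (by omega))
      simp only [wVal_succ P f g N _ t ht, h2, h3, sweepObj]
  have hJ0 : Jval P p0 f g N (hyb uk uk1 0) = Jval P p0 f g N uk := by
    have h : hyb uk uk1 0 = uk := funext fun τ => if_neg (Nat.not_lt_zero τ)
    rw [h]
  have hJN : Jval P p0 f g N (hyb uk uk1 N) = Jval P p0 f g N uk1 :=
    Jval_congr P p0 f g N _ _ (fun τ hτ => if_pos hτ)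
  have htel : ∑ t ∈ Finset.range N,
      (sweepObj P p0 f g N uk uk1 t (uk1 t) - sweepObj P p0 f g N uk uk1 t (uk t)) = 0 := by
    calc ∑ t ∈ Finset.range N,
        (sweepObj P p0 f g N uk uk1 t (uk1 t) - sweepObj P p0 f g N uk uk1 t (uk t))
        = ∑ t ∈ Finset.range N,
            (Jval P p0 f g N (hyb uk uk1 (t+1)) - Jval P p0 f g N (hyb uk uk1 t)) := by
          apply Finset.sum_congr rfl; intro t htm
          rw [Finset.mem_range] at htm
          rw [hA t htm, hB t htm]; ring
      _ = Jval P p0 f g N (hyb uk uk1 N) - Jval P p0 f g N (hyb uk uk1 0) :=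
          Finset.sum_range_sub (fun t => Jval P p0 f g N (hyb uk uk1 t)) N
      _ = 0 := by rw [hJN, hJ0, heq]; ring
  have hzero : ∀ t < N,
      sweepObj P p0 f g N uk uk1 t (uk1 t) = sweepObj P p0 f g N uk uk1 t (uk t) := by
    intro t ht
    have hnp : ∀ i ∈ Finset.range N,
        sweepObj P p0 f g N uk uk1 i (uk1 i) - sweepObj P p0 f g N uk uk1 i (uk i) ≤ 0 := by
      intro i hi; rw [Finset.mem_range] at hi
      have := hmin i hi (uk i); linarith
    have h := (Finset.sum_eq_zero_iff_of_nonpos hnp).mp htel t (Finset.mem_range.mpr ht)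
    linarith
  have part1 : ∀ t < N, uk1 t = uk t := by
    intro t ht
    apply htie t ht
    intro v
    calc sweepObj P p0 f g N uk uk1 t (uk t)
        = sweepObj P p0 f g N uk uk1 t (uk1 t) := (hzero t ht).symm
      _ ≤ sweepObj P p0 f g N uk uk1 t v := hmin t ht v
  refine ⟨part1, ?_⟩
  intro t ht v
  have hpFt : pF P p0 (hyb uk uk1 t) t = pF P p0 uk1 t :=
    pF_congr _ _ _ _ _ (fun σ hσ => if_pos hσ)
  have hwt1 : wVal P f g N uk (t+1) = wVal P f g N uk1 (t+1) :=
    wVal_congr _ _ _ _ _ _ _ ht (fun τ ha hb => (part1 τ hb).symm)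
  have hsweep : ∀ w : U, sweepObj P p0 f g N uk uk1 t w =
      ∑ s : S, pF P p0 uk1 t s *
        (f t s w + ∑ s' : S, P w s s' * wVal P f g N uk1 (t+1) s') := by
    intro w; unfold sweepObj; rw [hpFt, hwt1]
  rw [Jval_decomp P p0 f g N uk1 t ht.le,
      Jval_decomp P p0 f g N (Function.update uk1 t v) t ht.le]
  have hstage : ∑ τ ∈ Finset.range t, ∑ s : S,
        pF P p0 (Function.update uk1 t v) τ s * f τ s (Function.update uk1 t v τ)
      = ∑ τ ∈ Finset.range t, ∑ s : S, pF P p0 uk1 τ s * f τ s (uk1 τ) := by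
    apply Finset.sum_congr rfl; intro τ hτ
    rw [Finset.mem_range] at hτ
    rw [pF_congr P p0 _ uk1 τ (fun σ hσ => Function.update_of_ne (by omega) _ _),
      Function.update_of_ne (by omega) _ _]
  have hpFu : pF P p0 (Function.update uk1 t v) t = pF P p0 uk1 t :=
    pF_congr _ _ _ _ _ (fun σ hσ => Function.update_of_ne (by omega) _ _)
  have hwu : wVal P f g N (Function.update uk1 t v) (t+1) = wVal P f g N uk1 (t+1) :=
    wVal_congr _ _ _ _ _ _ _ ht (fun τ ha hb => Function.update_of_ne (by omega) _ _)
  rw [hstage]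
  apply add_le_add_right
  simp only [wVal_succ P f g N uk1 t ht,
    wVal_succ P f g N (Function.update uk1 t v) t ht, hpFu, hwu,
    Function.update_self]
  calc ∑ s : S, pF P p0 uk1 t s *
        (f t s (uk1 t) + ∑ s' : S, P (uk1 t) s s' * wVal P f g N uk1 (t+1) s')
      = sweepObj P p0 f g N uk uk1 t (uk1 t) := (hsweep (uk1 t)).symm
    _ ≤ sweepObj P p0 f g N uk uk1 t v := hmin t ht v
    _ = _ := hsweep v
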